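/- Given a finite graph G = (V, E), construct an aggregate allocation instance with, for each vertex v_j, one type t_j and one object h_j, one 'stayer' agent of type t_j with endowment and allocation h_j, and for each edge (v_j, v_k) ∈ E, L = |V|+1 'switcher' agents of type t_j with endowment h_j and allocation h_k (and symmetrically for t_k). Then for any subset Ṽ ⊆ V that is an independent set of G, the object-reduced allocation restricted to agents whose endowment and allocation both lie in {h_j : v_j ∈ Ṽ} has an acyclic aggregate allocation graph. -/
import Mathlib


variable {V : Type*} [Fintype V] [DecidableEq V]

/-- Agents of the instance built from a graph `G`: one stayer per vertex, and
`L = |V| + 1` switchers per oriented edge. -/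
def Agent (G : SimpleGraph V) : Type _ :=
  V ⊕ ({p : V × V // G.Adj p.1 p.2} × Fin (Fintype.card V + 1))

/-- Type of an agent: stayer at `v` and switchers leaving `v` have type `v`. -/
def typ (G : SimpleGraph V) : Agent G → V :=
  Sum.elim id (fun s => s.1.val.1)

/-- Endowment: stayer at `v` owns `h_v`; a switcher on edge `(j,k)` owns `h_j`. -/
def endow (G : SimpleGraph V) : Agent G → V :=
  Sum.elim id (fun s => s.1.val.1)

/-- Allocation: stayer at `v` keeps `h_v`; a switcher on edge `(j,k)` gets `h_k`. -/
def alloc (G : SimpleGraph V) : Agent G → V :=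
  Sum.elim id (fun s => s.1.val.2)

/-- Aggregate allocation graph of the object-reduced instance `x(H')`: only
agents whose endowment and allocation both lie in `H'` are kept. -/
def redAG (G : SimpleGraph V) (H' : Set V) (h h' : V) : Prop :=
  ∃ i j : Agent G,
    endow G i ∈ H' ∧ alloc G i ∈ H' ∧ endow G j ∈ H' ∧ alloc G j ∈ H' ∧
    typ G i = typ G j ∧ endow G j = h ∧ alloc G j = h' ∧ h' ≠ h ∧ alloc G i = h

/-- if `Vt` is an independent set of `G`, then the aggregate
allocation graph of the instance reduced to the objects of `Vt` is acyclic. -/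
theorem stmt_14 (G : SimpleGraph V) (Vt : Set V)
    (hind : ∀ a ∈ Vt, ∀ b ∈ Vt, ¬ G.Adj a b) :
    ∀ h : V, ¬ Relation.TransGen (redAG G Vt) h h := by
  have hempty : ∀ a b : V, ¬ redAG G Vt a b := by
    rintro a b ⟨i, j, _, _, hjE, hjA, _, hje, hja, hne, _⟩
    cases j with
    | inl v =>
      simp [endow, alloc] at hje hja
      exact hne (hja.symm.trans hje)
    | inr s =>
      simp [endow, alloc] at hjE hjA
      exact hind _ hjE _ hjA s.1.property
  intro h hcyc
  obtain ⟨b, -, h'⟩ := Relation.TransGen.tail'_iff.mp hcyc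
  exact hempty _ _ h'
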